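/- Let G be a Young function with derivative g satisfying g⁻ ≤ t g(t)/G(t) ≤ g⁺ for all t > 0 with g⁻ > 1. Define the Orlicz–Sobolev conjugate by (G*)⁻¹(t) = ∫₀ᵗ G⁻¹(s) s^{-(1+1/N)} ds, for an integer N ≥ 2, assuming ∫₀¹ G⁻¹(s) s^{-(1+1/N)} ds < ∞. Then lim_{t→∞} (G*)⁻¹(t) / G⁻¹(t^{(N-1)/N}) = 0; equivalently, G increases essentially more slowly than (G*)^{(N-1)/N}. -/

import Mathlib

open Filter Topology Set MeasureTheory

lemma stmt10_mono_aux (F F' : ℝ → ℝ) (hF : ∀ t > 0, HasDerivAt F (F' t) t)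
    (h0 : ∀ t > 0, 0 ≤ F' t) {x y : ℝ} (hx : 0 < x) (hxy : x ≤ y) : F x ≤ F y := by
  have key : MonotoneOn F (Icc x y) := by
    refine monotoneOn_of_deriv_nonneg (convex_Icc x y) ?_ ?_ ?_
    · intro t ht
      exact (hF t (lt_of_lt_of_le hx ht.1)).continuousAt.continuousWithinAt
    · intro t ht
      rw [interior_Icc] at ht
      exact (hF t (lt_trans hx ht.1)).differentiableAt.differentiableWithinAt
    · intro t ht
      rw [interior_Icc] at ht
      rw [(hF t (lt_trans hx ht.1)).deriv]
      exact h0 t (lt_trans hx ht.1)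
  exact key (left_mem_Icc.2 hxy) (right_mem_Icc.2 hxy) hxy

lemma stmt10_grow_lo (g G : ℝ → ℝ) (c : ℝ) (hGpos : ∀ t > 0, 0 < G t)
    (hderiv : ∀ t > 0, HasDerivAt G (g t) t)
    (hc : ∀ t > 0, c ≤ t * g t / G t) {x y : ℝ} (hx : 0 < x) (hxy : x ≤ y) :
    G x * (y / x) ^ c ≤ G y := by
  have hy : 0 < y := lt_of_lt_of_le hx hxy
  have hF := stmt10_mono_aux (fun t => Real.log (G t) - c * Real.log t)
      (fun t => g t / G t - c * t⁻¹)
      (fun t ht => (((hderiv t ht).log (hGpos t ht).ne')).sub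
        ((Real.hasDerivAt_log ht.ne').const_mul c))
      (fun t ht => by
        have h1 := hc t ht
        rw [mul_div_assoc] at h1
        have h2 : c / t ≤ g t / G t := (div_le_iff₀ ht).2 (by rw [mul_comm]; exact h1)
        rw [div_eq_mul_inv] at h2
        linarith) hx hxy
  have hlog : Real.log (G x * (y / x) ^ c) ≤ Real.log (G y) := by
    rw [Real.log_mul (hGpos x hx).ne' (Real.rpow_pos_of_pos (div_pos hy hx) c).ne',
      Real.log_rpow (div_pos hy hx), Real.log_div hy.ne' hx.ne']
    linarith
  exact (Real.log_le_log_iff (mul_pos (hGpos x hx) (Real.rpow_pos_of_pos (div_pos hy hx) c))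
    (hGpos y hy)).1 hlog

lemma stmt10_grow_hi (g G : ℝ → ℝ) (c : ℝ) (hGpos : ∀ t > 0, 0 < G t)
    (hderiv : ∀ t > 0, HasDerivAt G (g t) t)
    (hc : ∀ t > 0, t * g t / G t ≤ c) {x y : ℝ} (hx : 0 < x) (hxy : x ≤ y) :
    G y ≤ G x * (y / x) ^ c := by
  have hy : 0 < y := lt_of_lt_of_le hx hxy
  have hF := stmt10_mono_aux (fun t => c * Real.log t - Real.log (G t))
      (fun t => c * t⁻¹ - g t / G t)
      (fun t ht => ((Real.hasDerivAt_log ht.ne').const_mul c).sub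
        (((hderiv t ht).log (hGpos t ht).ne')))
      (fun t ht => by
        have h1 := hc t ht
        rw [mul_div_assoc] at h1
        have h2 : g t / G t ≤ c / t := (le_div_iff₀ ht).2 (by rw [mul_comm]; exact h1)
        rw [div_eq_mul_inv c t] at h2
        linarith) hx hxy
  have hlog : Real.log (G y) ≤ Real.log (G x * (y / x) ^ c) := by
    rw [Real.log_mul (hGpos x hx).ne' (Real.rpow_pos_of_pos (div_pos hy hx) c).ne',
      Real.log_rpow (div_pos hy hx), Real.log_div hy.ne' hx.ne']
    linarith
  exact (Real.log_le_log_iff (hGpos y hy)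
    (mul_pos (hGpos x hx) (Real.rpow_pos_of_pos (div_pos hy hx) c))).1 hlog

/-- Let `G` be a Young function with derivative `g` satisfying
`g⁻ ≤ t g t / G t ≤ g⁺` (`g⁻ > 1`), and define the inverse of the Orlicz–Sobolev conjugate
`(G*)⁻¹(t) = ∫₀ᵗ G⁻¹(s) s^{-(1+1/N)} ds` (`N ≥ 2`, integral convergent at `0`). Then
`lim_{t→∞} (G*)⁻¹(t) / G⁻¹(t^{(N-1)/N}) = 0`,
i.e. `G` increases essentially more slowly than `(G*)^{(N-1)/N}`. -/
theorem stmt10 (g G Ginv : ℝ → ℝ) (gm gp : ℝ) (N : ℕ) (hN : 2 ≤ N)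
    (hG0 : G 0 = 0)
    (hGsm : StrictMonoOn G (Set.Ici 0))
    (hGconv : ConvexOn ℝ (Set.Ici 0) G)
    (hGtop : Tendsto G atTop atTop)
    (hderiv : ∀ t > 0, HasDerivAt G (g t) t)
    (hgm : 1 < gm) (hgmgp : gm ≤ gp)
    (hLieb : ∀ t > 0, gm ≤ t * g t / G t ∧ t * g t / G t ≤ gp)
    (hinv_nonneg : ∀ s ≥ 0, 0 ≤ Ginv s)
    (hright : ∀ s ≥ 0, G (Ginv s) = s)
    (hleft : ∀ t ≥ 0, Ginv (G t) = t)
    (hconv0 : IntegrableOn (fun s => Ginv s / s ^ ((1:ℝ) + 1 / N)) (Set.Ioc 0 1)) :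
    Tendsto
      (fun t => (∫ s in (0:ℝ)..t, Ginv s / s ^ ((1:ℝ) + 1 / N)) /
        Ginv (t ^ (((N:ℝ) - 1) / N)))
      atTop (𝓝 0) := by
  have hNR : (2:ℝ) ≤ (N:ℝ) := by exact_mod_cast hN
  have hNpos : (0:ℝ) < (N:ℝ) := by linarith
  have hgm0 : (0:ℝ) < gm := by linarith
  have hgp0 : (0:ℝ) < gp := by linarith
  have hGpos : ∀ t > 0, 0 < G t := by
    intro t ht
    have := hGsm (Set.mem_Ici.2 le_rfl) (Set.mem_Ici.2 ht.le) ht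
    rwa [hG0] at this
  set p : ℝ := (1:ℝ) + 1 / (N:ℝ) with hpdef
  set q : ℝ := ((N:ℝ) - 1) / (N:ℝ) with hqdef
  set θ : ℝ := 1 / gm with hθdef
  set δ : ℝ := (θ + 1) / 2 - 1 / (N:ℝ) with hδdef
  set η : ℝ := min (1 / gp) (1 / (2 * (N:ℝ))) with hηdef
  set f : ℝ → ℝ := fun s => Ginv s / s ^ p with hfdef
  have hq0 : 0 < q := div_pos (by linarith) hNpos
  have hq1 : q ≤ 1 := by rw [hqdef, div_le_one hNpos]; linarith
  have hθ0 : 0 < θ := by positivity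
  have hθ1 : θ < 1 := by rw [hθdef, div_lt_one hgm0]; exact hgm
  have hδ0 : 0 ≤ δ := by
    have h1 : 1 / (N:ℝ) ≤ 1 / 2 := by
      apply one_div_le_one_div_of_le <;> linarith
    rw [hδdef]; linarith
  have hη0 : 0 < η := lt_min (by positivity) (by positivity)
  have hη : η ≤ 1 / (2 * (N:ℝ)) := min_le_right _ _
  have hηgp : η ≤ 1 / gp := min_le_left _ _
  have hGinvpos : ∀ s, 0 < s → 0 < Ginv s := by
    intro s hs
    rcases lt_or_eq_of_le (hinv_nonneg s hs.le) with h | h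
    · exact h
    · exfalso
      have := hright s hs.le
      rw [← h, hG0] at this
      linarith
  have hGinvmono : ∀ a b, 0 ≤ a → a ≤ b → Ginv a ≤ Ginv b := by
    intro a b ha hab
    by_contra hcon
    push_neg at hcon
    have := hGsm (Set.mem_Ici.2 (hinv_nonneg b (le_trans ha hab)))
      (Set.mem_Ici.2 (hinv_nonneg a ha)) hcon
    rw [hright a ha, hright b (le_trans ha hab)] at this
    linarith
  have hGinvTop : Tendsto Ginv atTop atTop := by
    rw [tendsto_atTop]
    intro b
    have h0 : (0:ℝ) ≤ max b 0 := le_max_right _ _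
    filter_upwards [eventually_ge_atTop (G (max b 0))] with s hs
    have hG0' : 0 ≤ G (max b 0) := by
      have h' := hGsm.monotoneOn (Set.mem_Ici.2 le_rfl) (Set.mem_Ici.2 h0) h0
      rwa [hG0] at h'
    calc b ≤ max b 0 := le_max_left _ _
      _ = Ginv (G (max b 0)) := (hleft _ h0).symm
      _ ≤ Ginv s := hGinvmono _ _ hG0' hs
  -- growth estimates for Ginv
  have hInvUp_lo : ∀ a b, 0 < a → a ≤ b → Ginv b ≤ Ginv a * (b / a) ^ θ := by
    intro a b ha hab
    have hb : 0 < b := lt_of_lt_of_le ha hab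
    have hx : 0 < Ginv a := hGinvpos a ha
    have hc1 : 1 ≤ (b / a) ^ θ := Real.one_le_rpow ((one_le_div ha).2 hab) hθ0.le
    have hxy : Ginv a ≤ Ginv a * (b / a) ^ θ := le_mul_of_one_le_right hx.le hc1
    have h4 := stmt10_grow_lo g G gm hGpos hderiv (fun t ht => (hLieb t ht).1) hx hxy
    have h5 : Ginv a * (b / a) ^ θ / Ginv a = (b / a) ^ θ :=
      mul_div_cancel_left₀ _ hx.ne'
    rw [h5] at h4
    have h6 : ((b / a) ^ θ) ^ gm = b / a := by
      rw [← Real.rpow_mul (div_nonneg hb.le ha.le), hθdef, one_div_mul_cancel hgm0.ne',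
        Real.rpow_one]
    rw [h6, hright a ha.le, mul_comm a (b / a), div_mul_cancel₀ b ha.ne'] at h4
    by_contra hcon
    push_neg at hcon
    have h7 := hGsm (Set.mem_Ici.2 (mul_nonneg hx.le (by positivity)))
      (Set.mem_Ici.2 (hinv_nonneg b hb.le)) hcon
    rw [hright b hb.le] at h7
    linarith
  have hInvUp_hi : ∀ a b, 0 < a → a ≤ b → Ginv a ≤ Ginv b * (a / b) ^ (1 / gp) := by
    intro a b ha hab
    have hb : 0 < b := lt_of_lt_of_le ha hab
    have hx : 0 < Ginv a := hGinvpos a ha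
    have hc1 : 1 ≤ (b / a) ^ (1 / gp) := Real.one_le_rpow ((one_le_div ha).2 hab) (by positivity)
    have hxy : Ginv a ≤ Ginv a * (b / a) ^ (1 / gp) := le_mul_of_one_le_right hx.le hc1
    have h4 := stmt10_grow_hi g G gp hGpos hderiv (fun t ht => (hLieb t ht).2) hx hxy
    have h5 : Ginv a * (b / a) ^ (1 / gp) / Ginv a = (b / a) ^ (1 / gp) :=
      mul_div_cancel_left₀ _ hx.ne'
    rw [h5] at h4
    have h6 : ((b / a) ^ (1 / gp)) ^ gp = b / a := by
      rw [← Real.rpow_mul (div_nonneg hb.le ha.le), one_div_mul_cancel hgp0.ne',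
        Real.rpow_one]
    rw [h6, hright a ha.le, mul_comm a (b / a), div_mul_cancel₀ b ha.ne'] at h4
    have hyle : Ginv a * (b / a) ^ (1 / gp) ≤ Ginv b := by
      by_contra hcon
      push_neg at hcon
      have h7 := hGsm (Set.mem_Ici.2 (hinv_nonneg b hb.le))
        (Set.mem_Ici.2 (mul_nonneg hx.le (by positivity))) hcon
      rw [hright b hb.le] at h7
      linarith
    have hprod : (b / a) ^ (1 / gp) * (a / b) ^ (1 / gp) = 1 := by
      rw [← Real.mul_rpow (div_nonneg hb.le ha.le) (div_nonneg ha.le hb.le),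
        show b / a * (a / b) = 1 from by field_simp, Real.one_rpow]
    calc Ginv a = Ginv a * ((b / a) ^ (1 / gp) * (a / b) ^ (1 / gp)) := by
          rw [hprod, mul_one]
      _ = Ginv a * (b / a) ^ (1 / gp) * (a / b) ^ (1 / gp) := by ring
      _ ≤ Ginv b * (a / b) ^ (1 / gp) :=
          mul_le_mul_of_nonneg_right hyle (Real.rpow_nonneg (div_nonneg ha.le hb.le) _)
  -- integrability facts
  have hfint1 : ∀ t, 1 ≤ t → IntegrableOn f (Ioc 1 t) := by
    intro t ht
    have hmeas : AEMeasurable Ginv (volume.restrict (Ioc 1 t)) :=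
      aemeasurable_restrict_of_monotoneOn measurableSet_Ioc
        (fun a ha b _ hab => hGinvmono a b (by linarith [ha.1] : (0:ℝ) ≤ a) hab)
    have hmeasf : AEStronglyMeasurable f (volume.restrict (Ioc 1 t)) := by
      apply AEMeasurable.aestronglyMeasurable
      exact hmeas.div (Real.continuous_rpow_const (by positivity)).measurable.aemeasurable
    refine Integrable.mono' (g := fun _ => Ginv t)
      (integrableOn_const measure_Ioc_lt_top.ne) hmeasf ?_
    refine (ae_restrict_iff' measurableSet_Ioc).2 (ae_of_all _ ?_)
    intro s hs
    have hs0 : (0:ℝ) < s := lt_trans one_pos hs.1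
    have h1 : 0 ≤ f s := div_nonneg (hinv_nonneg s hs0.le) (Real.rpow_nonneg hs0.le p)
    rw [Real.norm_eq_abs, abs_of_nonneg h1]
    have h2 : (1:ℝ) ≤ s ^ p := Real.one_le_rpow hs.1.le (by positivity)
    calc f s ≤ Ginv s := div_le_self (hinv_nonneg s hs0.le) h2
      _ ≤ Ginv t := hGinvmono s t hs0.le hs.2
  have hrint : ∀ (r a b : ℝ), 0 < a → IntegrableOn (fun s => s ^ r) (Ioc a b) := by
    intro r a b ha
    refine (ContinuousOn.integrableOn_Icc ?_).mono_set Ioc_subset_Icc_self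
    intro s hs
    exact (Real.continuousAt_rpow_const s r
      (Or.inl (ne_of_gt (lt_of_lt_of_le ha hs.1)))).continuousWithinAt
  have hrbound : ∀ (r a b : ℝ), 0 < a → a ≤ b → r + 1 < 0 →
      (∫ s in Ioc a b, s ^ r) ≤ a ^ (r + 1) / (-(r + 1)) := by
    intro r a b ha hab hr
    have h0 : (0:ℝ) ∉ Set.uIcc a b := by
      rw [Set.uIcc_of_le hab]
      intro h
      linarith [h.1]
    rw [← intervalIntegral.integral_of_le hab,
      integral_rpow (Or.inr ⟨ne_of_lt (by linarith), h0⟩)]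
    have hb0 : 0 ≤ b ^ (r + 1) := Real.rpow_nonneg (by linarith) _
    have heq : (b ^ (r + 1) - a ^ (r + 1)) / (r + 1)
        = (a ^ (r + 1) - b ^ (r + 1)) / (-(r + 1)) := by
      rw [div_eq_div_iff (by linarith) (by linarith)]
      ring
    rw [heq]
    exact (div_le_div_iff_of_pos_right (by linarith)).2 (by linarith)
  set C₀ : ℝ := ∫ s in Ioc (0:ℝ) 1, f s with hC₀
  -- the key pointwise bound
  have key : ∀ t : ℝ, 1 ≤ t →
      (∫ s in (0:ℝ)..t, f s) / Ginv (t ^ q) ≤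
        C₀ / Ginv (t ^ q) +
          (2 * (N:ℝ) * (t ^ q) ^ (-η) + 2 / (1 - θ) * t ^ ((θ - 1) / (2 * (N:ℝ)))) := by
    intro t ht
    have ht0 : (0:ℝ) < t := lt_of_lt_of_le one_pos ht
    have hT1 : 1 ≤ t ^ q := Real.one_le_rpow ht hq0.le
    have hT0 : (0:ℝ) < t ^ q := lt_of_lt_of_le one_pos hT1
    have hTt : t ^ q ≤ t := by
      have h := Real.rpow_le_rpow_of_exponent_le ht hq1
      rwa [Real.rpow_one] at h
    have hGT : 0 < Ginv (t ^ q) := hGinvpos _ hT0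
    set T : ℝ := t ^ q with hTdef
    set M : ℝ := 2 * (N:ℝ) * T ^ (-η) + 2 / (1 - θ) * t ^ ((θ - 1) / (2 * (N:ℝ))) with hMdef
    have hfI : IntegrableOn f (Ioc 1 t) := hfint1 t ht
    have hfIT1 : IntegrableOn f (Ioc 1 T) := hfI.mono_set (Ioc_subset_Ioc_right hTt)
    have hfIT2 : IntegrableOn f (Ioc T t) := hfI.mono_set (Ioc_subset_Ioc_left hT1)
    have hI1 : (∫ s in Ioc (1:ℝ) T, f s) ≤ Ginv T * (2 * (N:ℝ) * T ^ (-η)) := by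
      have hple : ∀ s ∈ Ioc (1:ℝ) T, f s ≤ Ginv T * T ^ (-η) * s ^ (η - p) := by
        intro s hs
        have hs0 : (0:ℝ) < s := lt_trans one_pos hs.1
        have h1 : Ginv s ≤ Ginv T * (s / T) ^ (1 / gp) := hInvUp_hi s T hs0 hs.2
        have h2 : (s / T) ^ (1 / gp) ≤ (s / T) ^ η :=
          Real.rpow_le_rpow_of_exponent_ge (div_pos hs0 hT0) ((div_le_one hT0).2 hs.2) hηgp
        have h3 : Ginv s ≤ Ginv T * (s / T) ^ η :=
          le_trans h1 (mul_le_mul_of_nonneg_left h2 (hinv_nonneg T hT0.le))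
        have h4 : f s ≤ Ginv T * (s / T) ^ η / s ^ p := by
          simp only [hfdef]
          gcongr
        refine h4.trans (le_of_eq ?_)
        rw [Real.div_rpow hs0.le hT0.le, Real.rpow_neg hT0.le, Real.rpow_sub hs0]
        have hTη : T ^ η ≠ 0 := (Real.rpow_pos_of_pos hT0 η).ne'
        have hsp : s ^ p ≠ 0 := (Real.rpow_pos_of_pos hs0 p).ne'
        field_simp
      calc (∫ s in Ioc (1:ℝ) T, f s)
          ≤ ∫ s in Ioc (1:ℝ) T, Ginv T * T ^ (-η) * s ^ (η - p) :=
            setIntegral_mono_on hfIT1 ((hrint (η - p) 1 T one_pos).const_mul _)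
              measurableSet_Ioc hple
        _ = Ginv T * T ^ (-η) * ∫ s in Ioc (1:ℝ) T, s ^ (η - p) := integral_const_mul _ _
        _ ≤ Ginv T * T ^ (-η) * (2 * (N:ℝ)) := by
            refine mul_le_mul_of_nonneg_left ?_
              (mul_nonneg (hinv_nonneg T hT0.le) (Real.rpow_nonneg hT0.le _))
            have hlt : η - p + 1 < 0 := by
              have hNN : 1 / (2 * (N:ℝ)) < 1 / (N:ℝ) := by
                rw [div_lt_div_iff₀ (by positivity) hNpos]
                linarith
              rw [hpdef]
              linarith
            have hb := hrbound (η - p) 1 T one_pos hT1 hlt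
            rw [Real.one_rpow] at hb
            refine hb.trans ?_
            have h5 : 1 / (2 * (N:ℝ)) ≤ -(η - p + 1) := by
              have heq : 1 / (N:ℝ) - 1 / (2 * (N:ℝ)) = 1 / (2 * (N:ℝ)) := by
                field_simp
                ring
              rw [hpdef]
              linarith
            calc 1 / (-(η - p + 1)) ≤ 1 / (1 / (2 * (N:ℝ))) :=
                  one_div_le_one_div_of_le (by positivity) h5
              _ = 2 * (N:ℝ) := one_div_one_div _
        _ = Ginv T * (2 * (N:ℝ) * T ^ (-η)) := by ring
    have hθd : θ - δ - p + 1 = (θ - 1) / 2 := by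
      rw [hpdef, hδdef]
      ring
    have hI2 : (∫ s in Ioc T t, f s) ≤ Ginv T * (2 / (1 - θ) * t ^ ((θ - 1) / (2 * (N:ℝ)))) := by
      have hple2 : ∀ s ∈ Ioc T t, f s ≤ Ginv T * T ^ (-θ) * t ^ δ * s ^ (θ - δ - p) := by
        intro s hs
        have hs0 : (0:ℝ) < s := lt_trans hT0 hs.1
        have h1 : Ginv s ≤ Ginv T * (s / T) ^ θ := hInvUp_lo T s hT0 hs.1.le
        have h4 : f s ≤ Ginv T * (s / T) ^ θ / s ^ p := by
          simp only [hfdef]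
          gcongr
        refine h4.trans ?_
        have he1 : Ginv T * (s / T) ^ θ / s ^ p = Ginv T * T ^ (-θ) * (s ^ (θ - δ - p) * s ^ δ) := by
          rw [Real.div_rpow hs0.le hT0.le, Real.rpow_neg hT0.le, ← Real.rpow_add hs0,
            show θ - δ - p + δ = θ - p from by ring, Real.rpow_sub hs0]
          have hTθ : T ^ θ ≠ 0 := (Real.rpow_pos_of_pos hT0 θ).ne'
          have hsp : s ^ p ≠ 0 := (Real.rpow_pos_of_pos hs0 p).ne'
          field_simp
        rw [he1]
        have h5 : s ^ δ ≤ t ^ δ := Real.rpow_le_rpow hs0.le hs.2 hδ0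
        calc Ginv T * T ^ (-θ) * (s ^ (θ - δ - p) * s ^ δ)
            ≤ Ginv T * T ^ (-θ) * (s ^ (θ - δ - p) * t ^ δ) := by
              refine mul_le_mul_of_nonneg_left
                (mul_le_mul_of_nonneg_left h5 (Real.rpow_nonneg hs0.le _))
                (mul_nonneg (hinv_nonneg T hT0.le) (Real.rpow_nonneg hT0.le _))
          _ = Ginv T * T ^ (-θ) * t ^ δ * s ^ (θ - δ - p) := by ring
      have hcollapse : Ginv T * T ^ (-θ) * t ^ δ * (T ^ ((θ - 1) / 2) / ((1 - θ) / 2))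
          = Ginv T * (2 / (1 - θ) * t ^ ((θ - 1) / (2 * (N:ℝ)))) := by
        have hx : T ^ (-θ) * t ^ δ * T ^ ((θ - 1) / 2) = t ^ ((θ - 1) / (2 * (N:ℝ))) := by
          rw [hTdef, ← Real.rpow_mul ht0.le, ← Real.rpow_mul ht0.le, ← Real.rpow_add ht0,
            ← Real.rpow_add ht0]
          congr 1
          rw [hqdef, hδdef]
          field_simp
          ring
        rw [← hx]
        have h1θ : (1:ℝ) - θ ≠ 0 := by linarith
        field_simp
      calc (∫ s in Ioc T t, f s)
          ≤ ∫ s in Ioc T t, Ginv T * T ^ (-θ) * t ^ δ * s ^ (θ - δ - p) :=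
            setIntegral_mono_on hfIT2 ((hrint (θ - δ - p) T t hT0).const_mul _)
              measurableSet_Ioc hple2
        _ = Ginv T * T ^ (-θ) * t ^ δ * ∫ s in Ioc T t, s ^ (θ - δ - p) := integral_const_mul _ _
        _ ≤ Ginv T * T ^ (-θ) * t ^ δ * (T ^ ((θ - 1) / 2) / ((1 - θ) / 2)) := by
            refine mul_le_mul_of_nonneg_left ?_
              (mul_nonneg (mul_nonneg (hinv_nonneg T hT0.le) (Real.rpow_nonneg hT0.le _))
                (Real.rpow_nonneg ht0.le _))
            have hb := hrbound (θ - δ - p) T t hT0 hTt (by rw [hθd]; linarith)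
            rwa [hθd, show -((θ - 1) / 2) = (1 - θ) / 2 from by ring] at hb
        _ = Ginv T * (2 / (1 - θ) * t ^ ((θ - 1) / (2 * (N:ℝ)))) := hcollapse
    have hNum : (∫ s in (0:ℝ)..t, f s) ≤ C₀ + Ginv T * M := by
      rw [intervalIntegral.integral_of_le (by linarith : (0:ℝ) ≤ t),
        show Ioc (0:ℝ) t = Ioc 0 1 ∪ Ioc 1 t from (Ioc_union_Ioc_eq_Ioc zero_le_one ht).symm,
        setIntegral_union (Ioc_disjoint_Ioc_of_le le_rfl) measurableSet_Ioc hconv0 hfI,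
        show Ioc (1:ℝ) t = Ioc 1 T ∪ Ioc T t from (Ioc_union_Ioc_eq_Ioc hT1 hTt).symm,
        setIntegral_union (Ioc_disjoint_Ioc_of_le le_rfl) measurableSet_Ioc hfIT1 hfIT2, hMdef, mul_add]
      have := add_le_add hI1 hI2
      rw [hC₀]
      linarith
    calc (∫ s in (0:ℝ)..t, f s) / Ginv T ≤ (C₀ + Ginv T * M) / Ginv T :=
          div_le_div_of_nonneg_right hNum hGT.le
      _ = C₀ / Ginv T + M := by
          rw [add_div, mul_div_assoc, mul_comm (Ginv T), div_mul_cancel₀ M hGT.ne']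
  have hnn : ∀ t : ℝ, 1 ≤ t → 0 ≤ (∫ s in (0:ℝ)..t, f s) / Ginv (t ^ q) := by
    intro t ht
    apply div_nonneg _ (hinv_nonneg _ (Real.rpow_nonneg (by linarith) q))
    apply intervalIntegral.integral_nonneg (by linarith)
    intro u hu
    exact div_nonneg (hinv_nonneg u hu.1) (Real.rpow_nonneg hu.1 p)
  refine squeeze_zero' (Filter.eventually_atTop.2 ⟨1, hnn⟩) (Filter.eventually_atTop.2 ⟨1, key⟩) ?_
  have h1 : Tendsto (fun t : ℝ => t ^ q) atTop atTop := tendsto_rpow_atTop hq0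
  have T1 : Tendsto (fun t : ℝ => C₀ / Ginv (t ^ q)) atTop (𝓝 0) :=
    Tendsto.div_atTop tendsto_const_nhds (hGinvTop.comp h1)
  have T2 : Tendsto (fun t : ℝ => 2 * (N:ℝ) * (t ^ q) ^ (-η)) atTop (𝓝 0) := by
    have h2 := (tendsto_rpow_neg_atTop hη0).comp h1
    have h3 := h2.const_mul (2 * (N:ℝ))
    simpa [Function.comp] using h3
  have T3 : Tendsto (fun t : ℝ => 2 / (1 - θ) * t ^ ((θ - 1) / (2 * (N:ℝ)))) atTop (𝓝 0) := by
    have h2 : Tendsto (fun t : ℝ => t ^ (-((1 - θ) / (2 * (N:ℝ))))) atTop (𝓝 0) :=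
      tendsto_rpow_neg_atTop (div_pos (by linarith) (by positivity))
    have h3 : (θ - 1) / (2 * (N:ℝ)) = -((1 - θ) / (2 * (N:ℝ))) := by ring
    rw [h3]
    simpa using h2.const_mul (2 / (1 - θ))
  have := T1.add (T2.add T3)
  simpa using this
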